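/- Let R be an almost Dedekind domain and I an invertible fractional ideal of R. Then I = (I ∩ R)·(I⁻¹ ∩ R)⁻¹; moreover I ∩ R and I⁻¹ ∩ R are invertible integral ideals, and if the map ν_I : Max(R) → ℤ is continuous (inverse topology on Max(R), discrete topology on ℤ), then ν_{I∩R} and ν_{I⁻¹∩R} are also continuous. -/

import Mathlib

open nonZeroDivisors

def AlmostDedekind (R : Type*) [CommRing R] [IsDomain R] : Prop :=
  ∀ M : MaximalSpectrum R, IsDiscreteValuationRing (Localization.AtPrime M.asIdeal)

open nonZeroDivisors

lemma aux_dvd {R : Type*} [CommRing R] [IsDomain R] (M : MaximalSpectrum R)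
    [ValuationRing (Localization.AtPrime M.asIdeal)]
    (p q : R) :
    (∃ t b : R, t ∉ M.asIdeal ∧ q * t = p * b) ∨ (∃ t b : R, t ∉ M.asIdeal ∧ p * t = q * b) := by
  set L := Localization.AtPrime M.asIdeal
  obtain ⟨c, hc | hc⟩ := ValuationRing.cond (algebraMap R L p) (algebraMap R L q)
  · obtain ⟨⟨b, t⟩, rfl⟩ := IsLocalization.mk'_surjective M.asIdeal.primeCompl c
    have h2 : algebraMap R L (p * b) = algebraMap R L (q * (t : R)) := by
      rw [map_mul, map_mul, ← IsLocalization.mk'_spec L b t, ← hc]; ring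
    obtain ⟨u, hu⟩ := (IsLocalization.eq_iff_exists M.asIdeal.primeCompl L).mp h2
    have hu0 : (u : R) ≠ 0 := fun h => u.2 (h ▸ M.asIdeal.zero_mem)
    exact Or.inl ⟨t, b, t.2, (mul_left_cancel₀ hu0 hu).symm⟩
  · obtain ⟨⟨b, t⟩, rfl⟩ := IsLocalization.mk'_surjective M.asIdeal.primeCompl c
    have h2 : algebraMap R L (q * b) = algebraMap R L (p * (t : R)) := by
      rw [map_mul, map_mul, ← IsLocalization.mk'_spec L b t, ← hc]; ring
    obtain ⟨u, hu⟩ := (IsLocalization.eq_iff_exists M.asIdeal.primeCompl L).mp h2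
    have hu0 : (u : R) ≠ 0 := fun h => u.2 (h ▸ M.asIdeal.zero_mem)
    exact Or.inr ⟨t, b, t.2, (mul_left_cancel₀ hu0 hu).symm⟩


section
variable {R : Type*} [CommRing R] [IsDomain R] {K : Type*} [Field K] [Algebra R K]
  [IsFractionRing R K] (M : MaximalSpectrum R) (v : K → ℤ)

lemma aux_map_ne {r : R} (hr : r ≠ 0) : algebraMap R K r ≠ 0 :=
  (map_ne_zero_iff _ (IsFractionRing.injective R K)).mpr hr

variable (hi : ∀ x : R, x ≠ 0 → ∀ n : ℕ, ((n : ℤ) ≤ v (algebraMap R K x) ↔ x ∈ M.asIdeal ^ n))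

include hi in
lemma aux_vR_nonneg {r : R} (hr : r ≠ 0) : 0 ≤ v (algebraMap R K r) := by
  simpa using (hi r hr 0).mpr (by simp)

include hi in
lemma aux_v_notmem {r : R} (hr : r ≠ 0) (hrM : r ∉ M.asIdeal) : v (algebraMap R K r) = 0 := by
  have h0 := aux_vR_nonneg M v hi hr
  have h1 : ¬ ((1 : ℤ) ≤ v (algebraMap R K r)) := fun h => hrM (by
    simpa using (hi r hr 1).mp (by exact_mod_cast h))
  omega

include hi in
lemma aux_ultraR {p q : R} (hp : p ≠ 0) (hq : q ≠ 0) (hpq : p + q ≠ 0) :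
    min (v (algebraMap R K p)) (v (algebraMap R K q)) ≤ v (algebraMap R K (p + q)) := by
  set n : ℤ := min (v (algebraMap R K p)) (v (algebraMap R K q)) with hn
  have hn0 : 0 ≤ n := le_min (aux_vR_nonneg M v hi hp) (aux_vR_nonneg M v hi hq)
  have hnn : ((n.toNat : ℤ)) = n := Int.toNat_of_nonneg hn0
  have hpm : p ∈ M.asIdeal ^ n.toNat := (hi p hp n.toNat).mp (by rw [hnn]; exact min_le_left _ _)
  have hqm : q ∈ M.asIdeal ^ n.toNat := (hi q hq n.toNat).mp (by rw [hnn]; exact min_le_right _ _)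
  have := (hi (p + q) hpq n.toNat).mpr (Ideal.add_mem _ hpm hqm)
  omega

variable (hm : ∀ x y : K, x ≠ 0 → y ≠ 0 → v (x * y) = v x + v y)

include hm in
lemma aux_v_eq {x : K} {a s : R} (hx : x ≠ 0) (hs : s ≠ 0)
    (h : x * algebraMap R K s = algebraMap R K a) :
    a ≠ 0 ∧ v (algebraMap R K a) = v x + v (algebraMap R K s) := by
  have hsK : algebraMap R K s ≠ 0 := aux_map_ne hs
  have ha : a ≠ 0 := by
    intro h0
    exact (mul_ne_zero hx hsK) (by rw [h, h0, map_zero])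
  exact ⟨ha, by rw [← h, hm x _ hx hsK]⟩

include hi hm in
lemma aux_ultra {x y : K} (hx : x ≠ 0) (hy : y ≠ 0) (hxy : x + y ≠ 0) :
    min (v x) (v y) ≤ v (x + y) := by
  obtain ⟨⟨a, s⟩, hxs⟩ := IsLocalization.surj R⁰ (S := K) x
  obtain ⟨⟨b, t⟩, hyt⟩ := IsLocalization.surj R⁰ (S := K) y
  dsimp only at hxs hyt
  have hs0 : (s : R) ≠ 0 := nonZeroDivisors.ne_zero s.2
  have ht0 : (t : R) ≠ 0 := nonZeroDivisors.ne_zero t.2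
  obtain ⟨ha, hva⟩ := aux_v_eq v hm hx hs0 hxs
  obtain ⟨hb, hvb⟩ := aux_v_eq v hm hy ht0 hyt
  have hst : (s : R) * t ≠ 0 := mul_ne_zero hs0 ht0
  have key : (x + y) * algebraMap R K ((s : R) * t) = algebraMap R K (a * t + b * s) := by
    rw [map_add, map_mul, map_mul, map_mul, ← hxs, ← hyt]; ring
  obtain ⟨habs, hvabs⟩ := aux_v_eq v hm hxy hst key
  have hat : a * (t : R) ≠ 0 := mul_ne_zero ha ht0
  have hbs : b * (s : R) ≠ 0 := mul_ne_zero hb hs0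
  have hu := aux_ultraR M v hi hat hbs habs
  have e1 : v (algebraMap R K (a * (t : R))) = v (algebraMap R K a) + v (algebraMap R K (t : R)) := by
    rw [map_mul]; exact hm _ _ (aux_map_ne ha) (aux_map_ne ht0)
  have e2 : v (algebraMap R K (b * (s : R))) = v (algebraMap R K b) + v (algebraMap R K (s : R)) := by
    rw [map_mul]; exact hm _ _ (aux_map_ne hb) (aux_map_ne hs0)
  have e3 : v (algebraMap R K ((s : R) * t)) = v (algebraMap R K (s : R)) + v (algebraMap R K (t : R)) := by
    rw [map_mul]; exact hm _ _ (aux_map_ne hs0) (aux_map_ne ht0)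
  omega

include hi hm in
lemma aux_Ldvd [ValuationRing (Localization.AtPrime M.asIdeal)]
    {x y : K} (hx : x ≠ 0) (hy : y ≠ 0) (hvxy : v x ≤ v y) :
    ∃ t b : R, t ∉ M.asIdeal ∧ y * algebraMap R K t = x * algebraMap R K b := by
  obtain ⟨⟨a, s⟩, hxs⟩ := IsLocalization.surj R⁰ (S := K) x
  obtain ⟨⟨a', s'⟩, hyt⟩ := IsLocalization.surj R⁰ (S := K) y
  dsimp only at hxs hyt
  have hs0 : (s : R) ≠ 0 := nonZeroDivisors.ne_zero s.2
  have hs'0 : (s' : R) ≠ 0 := nonZeroDivisors.ne_zero s'.2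
  obtain ⟨ha, hva⟩ := aux_v_eq v hm hx hs0 hxs
  obtain ⟨ha', hva'⟩ := aux_v_eq v hm hy hs'0 hyt
  have hP0 : a * (s' : R) ≠ 0 := mul_ne_zero ha hs'0
  have hQ0 : a' * (s : R) ≠ 0 := mul_ne_zero ha' hs0
  have hvP : v (algebraMap R K (a * (s' : R))) = v (algebraMap R K a) + v (algebraMap R K (s' : R)) := by
    rw [map_mul]; exact hm _ _ (aux_map_ne ha) (aux_map_ne hs'0)
  have hvQ : v (algebraMap R K (a' * (s : R))) = v (algebraMap R K a') + v (algebraMap R K (s : R)) := by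
    rw [map_mul]; exact hm _ _ (aux_map_ne ha') (aux_map_ne hs0)
  have hPQ : v (algebraMap R K (a * (s' : R))) ≤ v (algebraMap R K (a' * (s : R))) := by omega
  have hgot : ∃ t b : R, t ∉ M.asIdeal ∧ (a' * (s : R)) * t = (a * (s' : R)) * b := by
    rcases aux_dvd M (a * (s' : R)) (a' * (s : R)) with h | ⟨t, b, htM, hPt⟩
    · exact h
    · have ht0 : t ≠ 0 := fun h => htM (h ▸ M.asIdeal.zero_mem)
      have hb0 : b ≠ 0 := by
        intro h0
        apply mul_ne_zero hP0 ht0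
        rw [hPt, h0, mul_zero]
      have hvt : v (algebraMap R K t) = 0 := aux_v_notmem M v hi ht0 htM
      have heq : v (algebraMap R K (a * (s' : R))) + v (algebraMap R K t) =
          v (algebraMap R K (a' * (s : R))) + v (algebraMap R K b) := by
        rw [← hm _ _ (aux_map_ne hP0) (aux_map_ne ht0),
          ← hm _ _ (aux_map_ne hQ0) (aux_map_ne hb0), ← map_mul, ← map_mul, hPt]
      have hvb0 : 0 ≤ v (algebraMap R K b) := aux_vR_nonneg M v hi hb0
      have hvb : v (algebraMap R K b) = 0 := by omega
      have hbM : b ∉ M.asIdeal := by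
        intro hmem
        have : (1 : ℤ) ≤ v (algebraMap R K b) := by
          exact_mod_cast (hi b hb0 1).mpr (by simpa using hmem)
        omega
      exact ⟨b, t, hbM, hPt.symm⟩
  obtain ⟨t, b, htM, hQt⟩ := hgot
  refine ⟨t, b, htM, ?_⟩
  have hcan : algebraMap R K (s : R) * algebraMap R K (s' : R) ≠ 0 :=
    mul_ne_zero (aux_map_ne hs0) (aux_map_ne hs'0)
  have h5 : algebraMap R K a' * algebraMap R K (s : R) * algebraMap R K t
      = algebraMap R K a * algebraMap R K (s' : R) * algebraMap R K b := by
    have h6 := congrArg (algebraMap R K) hQt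
    simpa [map_mul, mul_assoc] using h6
  apply mul_right_cancel₀ hcan
  calc y * algebraMap R K t * (algebraMap R K (s : R) * algebraMap R K (s' : R))
      = y * algebraMap R K (s' : R) * algebraMap R K (s : R) * algebraMap R K t := by ring
    _ = algebraMap R K a' * algebraMap R K (s : R) * algebraMap R K t := by rw [hyt]
    _ = algebraMap R K a * algebraMap R K (s' : R) * algebraMap R K b := h5
    _ = x * algebraMap R K (s : R) * algebraMap R K (s' : R) * algebraMap R K b := by rw [hxs]
    _ = x * algebraMap R K b * (algebraMap R K (s : R) * algebraMap R K (s' : R)) := by ring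

end

lemma aux_pruefer {R : Type*} [CommRing R] [IsDomain R] {K : Type*} [Field K] [Algebra R K]
    [IsFractionRing R K] (hR : AlmostDedekind R)
    (v : MaximalSpectrum R → K → ℤ)
    (hv_mul : ∀ M : MaximalSpectrum R, ∀ x y : K, x ≠ 0 → y ≠ 0 →
      v M (x * y) = v M x + v M y)
    (hv_int : ∀ M : MaximalSpectrum R, ∀ x : R, x ≠ 0 →
      ∀ n : ℕ, ((n : ℤ) ≤ v M (algebraMap R K x) ↔ x ∈ M.asIdeal ^ n))
    (J : FractionalIdeal R⁰ K) (hJ : J ≠ 0) (hfg : (J : Submodule R K).FG) :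
    J * J⁻¹ = 1 := by
  classical
  have hle : J * J⁻¹ ≤ 1 := by
    rw [FractionalIdeal.inv_eq]; exact FractionalIdeal.mul_one_div_le_one
  obtain ⟨A, hA⟩ := FractionalIdeal.le_one_iff_exists_coeIdeal.mp hle
  rw [← hA]
  suffices hAtop : A = ⊤ by rw [hAtop, FractionalIdeal.coeIdeal_top]
  by_contra hAtop
  obtain ⟨M0, hM0max, hAM⟩ := Ideal.exists_le_maximal A hAtop
  set M : MaximalSpectrum R := ⟨M0, hM0max⟩ with hMdef
  haveI := hR M
  obtain ⟨s, hs⟩ := hfg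
  have hex : ∃ x ∈ s, x ≠ (0 : K) := by
    by_contra hall
    push_neg at hall
    apply hJ
    have hbot : (J : Submodule R K) = ⊥ := by
      rw [← hs]
      exact Submodule.span_eq_bot.mpr (fun x hx => hall x (Finset.mem_coe.mp hx))
    exact FractionalIdeal.coeToSubmodule_injective
      (hbot.trans FractionalIdeal.coe_zero.symm)
  obtain ⟨x1, hx1s, hx10⟩ := hex
  set s' := s.filter (fun x => x ≠ (0 : K)) with hs'def
  have hs'ne : s'.Nonempty := ⟨x1, Finset.mem_filter.mpr ⟨hx1s, hx10⟩⟩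
  obtain ⟨x₀, hx₀s', hx₀min⟩ := Finset.exists_min_image s' (v M) hs'ne
  have hx₀0 : x₀ ≠ 0 := (Finset.mem_filter.mp hx₀s').2
  have hx₀s : x₀ ∈ s := (Finset.mem_filter.mp hx₀s').1
  have hchoice : ∀ x ∈ s, ∃ t b : R, t ∉ M.asIdeal ∧
      x * algebraMap R K t = x₀ * algebraMap R K b := by
    intro x hx
    by_cases hx0 : x = 0
    · exact ⟨1, 0, fun h => hM0max.ne_top ((Ideal.eq_top_iff_one _).mpr h), by simp [hx0]⟩
    · exact aux_Ldvd M (v M) (hv_int M) (hv_mul M) hx₀0 hx0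
        (hx₀min x (Finset.mem_filter.mpr ⟨hx, hx0⟩))
  choose t b htM heq using hchoice
  set T : R := ∏ x ∈ s.attach, t x.1 x.2 with hTdef
  have hTM : T ∉ M.asIdeal :=
    Finset.prod_induction _ (fun r => r ∉ M.asIdeal)
      (fun a b ha hb hab => ((hM0max.isPrime.mem_or_mem hab).elim ha hb))
      (fun h => hM0max.ne_top ((Ideal.eq_top_iff_one _).mpr h))
      (fun x _ => htM x.1 x.2)
  set y : K := algebraMap R K T * x₀⁻¹ with hydef
  have hymem : y ∈ J⁻¹ := by
    rw [FractionalIdeal.mem_inv_iff hJ]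
    intro z hz
    have hz' : z ∈ Submodule.span R (s : Set K) := by
      rw [hs]; exact FractionalIdeal.mem_coe.mpr hz
    suffices h : Submodule.span R (s : Set K) ≤
        Submodule.comap ((Algebra.lmul R K) y)
          ((1 : FractionalIdeal R⁰ K) : Submodule R K) by
      exact FractionalIdeal.mem_coe.mp (h hz')
    rw [Submodule.span_le]
    intro x hxset
    have hxF : x ∈ s := Finset.mem_coe.mp hxset
    simp only [SetLike.mem_coe, Submodule.mem_comap]
    show y * x ∈ ((1 : FractionalIdeal R⁰ K) : Submodule R K)
    by_cases hx0 : x = 0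
    · rw [hx0, mul_zero]; exact Submodule.zero_mem _
    rw [FractionalIdeal.mem_coe, FractionalIdeal.mem_one_iff]
    set Rst : R := ∏ z ∈ s.attach.erase ⟨x, hxF⟩, t z.1 z.2 with hRstdef
    have hTsplit : T = t x hxF * Rst :=
      (Finset.mul_prod_erase s.attach (fun z => t z.1 z.2)
        (Finset.mem_attach s ⟨x, hxF⟩)).symm
    refine ⟨Rst * b x hxF, ?_⟩
    calc algebraMap R K (Rst * b x hxF)
        = algebraMap R K Rst * (x₀⁻¹ * (x₀ * algebraMap R K (b x hxF))) := by
          rw [map_mul, ← mul_assoc x₀⁻¹, inv_mul_cancel₀ hx₀0, one_mul]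
      _ = algebraMap R K Rst * (x₀⁻¹ * (x * algebraMap R K (t x hxF))) := by
          rw [heq x hxF]
      _ = (algebraMap R K (t x hxF) * algebraMap R K Rst) * x₀⁻¹ * x := by ring
      _ = y * x := by rw [← map_mul, ← hTsplit, hydef]
  have hx₀J : x₀ ∈ J :=
    FractionalIdeal.mem_coe.mp (hs ▸ Submodule.subset_span (Finset.mem_coe.mpr hx₀s))
  have hTmem : algebraMap R K T ∈ (↑A : FractionalIdeal R⁰ K) := by
    rw [hA]
    have hmul := FractionalIdeal.mul_mem_mul hx₀J hymem
    have : x₀ * y = algebraMap R K T := by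
      rw [hydef]; field_simp
    rwa [this] at hmul
  obtain ⟨T', hT'A, hT'eq⟩ := (FractionalIdeal.mem_coeIdeal _).mp hTmem
  have : T' = T := IsFractionRing.injective R K hT'eq
  exact hTM (hAM (this ▸ hT'A))

/-- The inverse topology on the maximal spectrum. -/
def invTop (R : Type*) [CommRing R] : TopologicalSpace (MaximalSpectrum R) :=
  .generateFrom {s | ∃ I : Ideal R, I.FG ∧ s = {M | I ≤ M.asIdeal}}

/-- Let `R` be an almost Dedekind domain with fraction field `K`, `v M` the valuation
of `R_M` and `ν I M` the minimum of `v M` on nonzero elements of the nonzero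
fractional ideal `I`.  If `I` is invertible, then `I = (I ∩ R)·(I⁻¹ ∩ R)⁻¹`, the
ideals `I ∩ R` and `I⁻¹ ∩ R` are invertible integral ideals, and if `ν I` is
continuous (inverse topology on `Max(R)`, discrete topology on `ℤ`) then so are
`ν (I ∩ R)` and `ν (I⁻¹ ∩ R)`. -/
theorem stmt6 {R : Type*} [CommRing R] [IsDomain R] (hR : AlmostDedekind R)
    (K : Type*) [Field K] [Algebra R K] [IsFractionRing R K]
    (v : MaximalSpectrum R → K → ℤ)
    (hv_mul : ∀ M : MaximalSpectrum R, ∀ x y : K, x ≠ 0 → y ≠ 0 →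
      v M (x * y) = v M x + v M y)
    (hv_int : ∀ M : MaximalSpectrum R, ∀ x : R, x ≠ 0 →
      ∀ n : ℕ, ((n : ℤ) ≤ v M (algebraMap R K x) ↔ x ∈ M.asIdeal ^ n))
    (ν : FractionalIdeal R⁰ K → MaximalSpectrum R → ℤ)
    (hν : ∀ I : FractionalIdeal R⁰ K, I ≠ 0 → ∀ M : MaximalSpectrum R,
      IsLeast (v M '' {x : K | x ∈ I ∧ x ≠ 0}) (ν I M))
    (I : FractionalIdeal R⁰ K) (hI : I ≠ 0) (hinv : I * I⁻¹ = 1) :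
    I = (I ⊓ 1) * (I⁻¹ ⊓ 1)⁻¹ ∧
    (I ⊓ 1) ≤ 1 ∧ (I ⊓ 1) * (I ⊓ 1)⁻¹ = 1 ∧
    (I⁻¹ ⊓ 1) ≤ 1 ∧ (I⁻¹ ⊓ 1) * (I⁻¹ ⊓ 1)⁻¹ = 1 ∧
    (@Continuous _ _ (invTop R) ⊥ (ν I) →
      @Continuous _ _ (invTop R) ⊥ (ν (I ⊓ 1)) ∧
      @Continuous _ _ (invTop R) ⊥ (ν (I⁻¹ ⊓ 1))) := by
  classical
  have hI' : I⁻¹ ≠ 0 := by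
    intro h; rw [h, mul_zero] at hinv; exact one_ne_zero hinv.symm
  have hIii : (I⁻¹)⁻¹ = I :=
    (FractionalIdeal.right_inverse_eq K I⁻¹ I (by rw [mul_comm]; exact hinv)).symm
  have hfg1 : ((1 : FractionalIdeal R⁰ K) : Submodule R K).FG := by
    rw [FractionalIdeal.coe_one]
    exact ⟨{1}, by simp [Submodule.one_eq_span]⟩
  -- sup with 1 is nonzero
  have hsup0 : ∀ J : FractionalIdeal R⁰ K, J ⊔ 1 ≠ 0 := by
    intro J h
    have h1 : (1 : K) ∈ J ⊔ 1 := by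
      rw [← FractionalIdeal.mem_coe, FractionalIdeal.coe_sup]
      exact Submodule.mem_sup_right
        (FractionalIdeal.mem_coe.mpr (FractionalIdeal.one_mem_one _))
    rw [h] at h1
    exact one_ne_zero ((FractionalIdeal.mem_zero_iff _).mp h1)
  -- inverse of (J ⊔ 1)
  have hsupinv : ∀ J : FractionalIdeal R⁰ K, J ≠ 0 → (J ⊔ 1)⁻¹ = J⁻¹ ⊓ 1 := by
    intro J hJ0
    ext x
    rw [FractionalIdeal.mem_inv_iff (hsup0 J), ← FractionalIdeal.mem_coe,
      FractionalIdeal.coe_inf, Submodule.mem_inf, FractionalIdeal.mem_coe,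
      FractionalIdeal.mem_coe, FractionalIdeal.mem_inv_iff hJ0]
    constructor
    · intro h
      refine ⟨fun y hy => h y ?_, ?_⟩
      · rw [← FractionalIdeal.mem_coe, FractionalIdeal.coe_sup]
        exact Submodule.mem_sup_left (FractionalIdeal.mem_coe.mpr hy)
      · have := h 1 (by
          rw [← FractionalIdeal.mem_coe, FractionalIdeal.coe_sup]
          exact Submodule.mem_sup_right
            (FractionalIdeal.mem_coe.mpr (FractionalIdeal.one_mem_one _)))
        simpa using this
    · rintro ⟨h1, h2⟩ z hz
      rw [← FractionalIdeal.mem_coe, FractionalIdeal.coe_sup] at hz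
      obtain ⟨z1, hz1, z2, hz2, rfl⟩ := Submodule.mem_sup.mp hz
      rw [mul_add, ← FractionalIdeal.mem_coe]
      apply Submodule.add_mem
      · exact FractionalIdeal.mem_coe.mpr (h1 z1 (FractionalIdeal.mem_coe.mp hz1))
      · obtain ⟨r, rfl⟩ := (FractionalIdeal.mem_one_iff _).mp h2
        obtain ⟨r2, rfl⟩ := (FractionalIdeal.mem_one_iff _).mp (FractionalIdeal.mem_coe.mp hz2)
        exact FractionalIdeal.mem_coe.mpr
          ((FractionalIdeal.mem_one_iff _).mpr ⟨r * r2, by rw [map_mul]⟩)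
  -- the two finitely generated invertible sups
  have hCfg : ((I ⊔ 1 : FractionalIdeal R⁰ K) : Submodule R K).FG := by
    rw [FractionalIdeal.coe_sup]
    exact Submodule.FG.sup (FractionalIdeal.fg_of_isUnit I (IsUnit.of_mul_eq_one _ hinv)) hfg1
  have hDfg : ((I⁻¹ ⊔ 1 : FractionalIdeal R⁰ K) : Submodule R K).FG := by
    rw [FractionalIdeal.coe_sup]
    exact Submodule.FG.sup (FractionalIdeal.fg_of_isUnit I⁻¹
      (IsUnit.of_mul_eq_one _ (by rw [mul_comm]; exact hinv))) hfg1
  have hCu : (I ⊔ 1) * (I ⊔ 1)⁻¹ = 1 :=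
    aux_pruefer hR v hv_mul hv_int _ (hsup0 I) hCfg
  have hDu : (I⁻¹ ⊔ 1) * (I⁻¹ ⊔ 1)⁻¹ = 1 :=
    aux_pruefer hR v hv_mul hv_int _ (hsup0 I⁻¹) hDfg
  have hCinvinv : ((I ⊔ 1)⁻¹)⁻¹ = I ⊔ 1 :=
    (FractionalIdeal.right_inverse_eq K _ _ (by rw [mul_comm]; exact hCu)).symm
  have hDinvinv : ((I⁻¹ ⊔ 1)⁻¹)⁻¹ = I⁻¹ ⊔ 1 :=
    (FractionalIdeal.right_inverse_eq K _ _ (by rw [mul_comm]; exact hDu)).symm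
  have hBC : I⁻¹ ⊓ 1 = (I ⊔ 1)⁻¹ := (hsupinv I hI).symm
  have hAD : I ⊓ 1 = (I⁻¹ ⊔ 1)⁻¹ := by
    have := hsupinv I⁻¹ hI'
    rw [hIii] at this
    exact this.symm
  have hG1 : I = (I ⊓ 1) * (I⁻¹ ⊓ 1)⁻¹ := by
    rw [hAD, hBC, hCinvinv]
    have hDI : (I⁻¹ ⊔ 1) * I = I ⊔ 1 := by
      rw [FractionalIdeal.sup_eq_add, FractionalIdeal.sup_eq_add, add_mul, one_mul,
        mul_comm I⁻¹ I, hinv, add_comm]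
    calc I = ((I⁻¹ ⊔ 1)⁻¹ * (I⁻¹ ⊔ 1)) * I := by rw [mul_comm _ (I⁻¹ ⊔ 1), hDu, one_mul]
      _ = (I⁻¹ ⊔ 1)⁻¹ * ((I⁻¹ ⊔ 1) * I) := by rw [mul_assoc]
      _ = (I⁻¹ ⊔ 1)⁻¹ * (I ⊔ 1) := by rw [hDI]
  have hG3 : (I ⊓ 1) * (I ⊓ 1)⁻¹ = 1 := by rw [hAD, hDinvinv, mul_comm]; exact hDu
  have hG5 : (I⁻¹ ⊓ 1) * (I⁻¹ ⊓ 1)⁻¹ = 1 := by rw [hBC, hCinvinv, mul_comm]; exact hCu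
  refine ⟨hG1, inf_le_right, hG3, inf_le_right, hG5, ?_⟩
  -- valuation part
  have hv1 : ∀ M : MaximalSpectrum R, v M 1 = 0 := by
    intro M
    have := hv_mul M 1 1 one_ne_zero one_ne_zero
    rw [mul_one] at this
    omega
  have hν1 : ∀ M : MaximalSpectrum R, ν 1 M = 0 := by
    intro M
    refine (hν 1 one_ne_zero M).unique ⟨⟨1, ⟨FractionalIdeal.one_mem_one _, one_ne_zero⟩, hv1 M⟩, ?_⟩
    rintro z ⟨x, ⟨hx1, hx0⟩, rfl⟩
    obtain ⟨r, rfl⟩ := (FractionalIdeal.mem_one_iff _).mp hx1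
    exact aux_vR_nonneg M (v M) (hv_int M) (fun h => hx0 (by rw [h, map_zero]))
  have hνmul : ∀ A B : FractionalIdeal R⁰ K, A ≠ 0 → B ≠ 0 → ∀ M : MaximalSpectrum R,
      ν (A * B) M = ν A M + ν B M := by
    intro A B hA hB M
    obtain ⟨⟨xA, ⟨hxA, hxA0⟩, hvA⟩, hlbA⟩ := hν A hA M
    obtain ⟨⟨xB, ⟨hxB, hxB0⟩, hvB⟩, hlbB⟩ := hν B hB M
    have hmemAB : xA * xB ∈ A * B := FractionalIdeal.mul_mem_mul hxA hxB
    have hAB0 : A * B ≠ 0 := by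
      intro h; rw [h] at hmemAB
      exact (mul_ne_zero hxA0 hxB0) ((FractionalIdeal.mem_zero_iff _).mp hmemAB)
    obtain ⟨⟨z, ⟨hz, hz0⟩, hvz⟩, hlb⟩ := hν (A * B) hAB0 M
    have hle1 : ν (A * B) M ≤ ν A M + ν B M := by
      have h1 := hlb ⟨xA * xB, ⟨hmemAB, mul_ne_zero hxA0 hxB0⟩, rfl⟩
      rw [hv_mul M xA xB hxA0 hxB0, hvA, hvB] at h1
      exact h1
    have hge : ν A M + ν B M ≤ ν (A * B) M := by
      suffices claim : ∀ w ∈ ((A : Submodule R K) * (B : Submodule R K)), w ≠ 0 →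
          ν A M + ν B M ≤ v M w by
        refine hvz ▸ claim z ?_ hz0
        rw [← FractionalIdeal.coe_mul]
        exact FractionalIdeal.mem_coe.mpr hz
      intro w hw
      refine Submodule.mul_induction_on hw ?_ ?_
      · intro m hm n hn hmn0
        have hm0 : m ≠ 0 := fun h => hmn0 (by rw [h, zero_mul])
        have hn0 : n ≠ 0 := fun h => hmn0 (by rw [h, mul_zero])
        rw [hv_mul M m n hm0 hn0]
        have h1 := hlbA ⟨m, ⟨FractionalIdeal.mem_coe.mp hm, hm0⟩, rfl⟩
        have h2 := hlbB ⟨n, ⟨FractionalIdeal.mem_coe.mp hn, hn0⟩, rfl⟩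
        omega
      · intro x y hx hy hxy0
        by_cases hx0 : x = 0
        · simpa [hx0] using hy (by simpa [hx0] using hxy0)
        by_cases hy0 : y = 0
        · simpa [hy0] using hx (by simpa [hy0] using hxy0)
        have hu := aux_ultra M (v M) (hv_int M) (hv_mul M) hx0 hy0 hxy0
        have h1 := hx hx0
        have h2 := hy hy0
        omega
    omega
  -- the inf with 1 is nonzero
  have hinf0 : ∀ J : FractionalIdeal R⁰ K, J ≠ 0 → J ⊓ 1 ≠ 0 := by
    intro J hJ0 h
    have hex : ∃ z ∈ J, z ≠ (0 : K) := by
      by_contra hc; push_neg at hc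
      exact hJ0 (FractionalIdeal.eq_zero_iff.mpr hc)
    obtain ⟨z, hz, hz0⟩ := hex
    obtain ⟨⟨a, s⟩, hzs⟩ := IsLocalization.surj R⁰ (S := K) z
    dsimp only at hzs
    have hs0 : (s : R) ≠ 0 := nonZeroDivisors.ne_zero s.2
    have hmem : z * algebraMap R K (s : R) ∈ J := by
      rw [← FractionalIdeal.mem_coe]
      have : z * algebraMap R K (s : R) = (s : R) • z := by
        rw [Algebra.smul_def, mul_comm]
      rw [this]
      exact Submodule.smul_mem _ _ (FractionalIdeal.mem_coe.mpr hz)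
    rw [hzs] at hmem
    have ha0 : algebraMap R K a ≠ 0 := by
      rw [← hzs]
      exact mul_ne_zero hz0 (aux_map_ne hs0)
    have hmem2 : algebraMap R K a ∈ J ⊓ 1 := by
      rw [← FractionalIdeal.mem_coe, FractionalIdeal.coe_inf, Submodule.mem_inf]
      exact ⟨FractionalIdeal.mem_coe.mpr hmem,
        FractionalIdeal.mem_coe.mpr ((FractionalIdeal.mem_one_iff _).mpr ⟨a, rfl⟩)⟩
    rw [h] at hmem2
    exact ha0 ((FractionalIdeal.mem_zero_iff _).mp hmem2)
  -- key computation
  have hkey : ∀ J : FractionalIdeal R⁰ K, J ≠ 0 → J⁻¹ ≠ 0 → J * J⁻¹ = 1 →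
      ∀ M : MaximalSpectrum R, ν (J ⊓ 1) M = max (ν J M) 0 := by
    intro J hJ0 hJi0 hJu M
    have hJii : (J⁻¹)⁻¹ = J :=
      (FractionalIdeal.right_inverse_eq K J⁻¹ J (by rw [mul_comm]; exact hJu)).symm
    have hE0 : J⁻¹ ⊔ 1 ≠ 0 := hsup0 J⁻¹
    have hEfg : ((J⁻¹ ⊔ 1 : FractionalIdeal R⁰ K) : Submodule R K).FG := by
      rw [FractionalIdeal.coe_sup]
      exact Submodule.FG.sup (FractionalIdeal.fg_of_isUnit J⁻¹
        (IsUnit.of_mul_eq_one _ (by rw [mul_comm]; exact hJu))) hfg1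
    have hEu : (J⁻¹ ⊔ 1) * (J⁻¹ ⊔ 1)⁻¹ = 1 :=
      aux_pruefer hR v hv_mul hv_int _ hE0 hEfg
    have hJE : J ⊓ 1 = (J⁻¹ ⊔ 1)⁻¹ := by
      have := hsupinv J⁻¹ hJi0
      rw [hJii] at this
      exact this.symm
    have hJinf0 : J ⊓ 1 ≠ 0 := hinf0 J hJ0
    have hprod : (J ⊓ 1) * (J⁻¹ ⊔ 1) = 1 := by
      rw [hJE, mul_comm]; exact hEu
    have hνprod : ν (J ⊓ 1) M + ν (J⁻¹ ⊔ 1) M = 0 := by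
      rw [← hνmul _ _ hJinf0 hE0 M, hprod, hν1 M]
    have hJsum : ν J M + ν J⁻¹ M = 0 := by
      rw [← hνmul J J⁻¹ hJ0 hJi0 M, hJu, hν1 M]
    -- lower bound on ν (J⁻¹ ⊔ 1) M
    obtain ⟨⟨z, ⟨hzE, hz0⟩, hvz⟩, _⟩ := hν _ hE0 M
    have hνJi := (hν J⁻¹ hJi0 M).2
    have hEmin : min (ν J⁻¹ M) 0 ≤ ν (J⁻¹ ⊔ 1) M := by
      rw [← hvz]
      rw [← FractionalIdeal.mem_coe, FractionalIdeal.coe_sup] at hzE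
      obtain ⟨z1, hz1, z2, hz2, rfl⟩ := Submodule.mem_sup.mp hzE
      have hb1 : z1 ≠ 0 → ν J⁻¹ M ≤ v M z1 := fun h =>
        hνJi ⟨z1, ⟨FractionalIdeal.mem_coe.mp hz1, h⟩, rfl⟩
      have hb2 : z2 ≠ 0 → 0 ≤ v M z2 := by
        intro h
        obtain ⟨r, rfl⟩ := (FractionalIdeal.mem_one_iff _).mp (FractionalIdeal.mem_coe.mp hz2)
        exact aux_vR_nonneg M (v M) (hv_int M) (fun h0 => h (by rw [h0, map_zero]))
      by_cases h1 : z1 = 0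
      · have hz20 : z2 ≠ 0 := by simpa [h1] using hz0
        have := hb2 hz20
        simp only [h1, zero_add]
        omega
      by_cases h2 : z2 = 0
      · have := hb1 h1
        simp only [h2, add_zero]
        omega
      · have hu := aux_ultra M (v M) (hv_int M) (hv_mul M) h1 h2 hz0
        have := hb1 h1
        have := hb2 h2
        omega
    -- lower bound on ν (J ⊓ 1) M
    obtain ⟨⟨w, ⟨hwJ1, hw0⟩, hvw⟩, _⟩ := hν _ hJinf0 M
    have hwmem : w ∈ J ∧ w ∈ (1 : FractionalIdeal R⁰ K) := by
      rw [← FractionalIdeal.mem_coe, FractionalIdeal.coe_inf, Submodule.mem_inf] at hwJ1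
      exact ⟨FractionalIdeal.mem_coe.mp hwJ1.1, FractionalIdeal.mem_coe.mp hwJ1.2⟩
    have h1 : ν J M ≤ v M w := (hν J hJ0 M).2 ⟨w, ⟨hwmem.1, hw0⟩, rfl⟩
    have h2 : 0 ≤ v M w := by
      obtain ⟨r, hr⟩ := (FractionalIdeal.mem_one_iff _).mp hwmem.2
      rw [← hr]
      exact aux_vR_nonneg M (v M) (hv_int M) (fun h0 => hw0 (by rw [← hr, h0, map_zero]))
    omega
  have hk1 : ∀ M : MaximalSpectrum R, ν (I ⊓ 1) M = max (ν I M) 0 := hkey I hI hI' hinv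
  have hk2 : ∀ M : MaximalSpectrum R, ν (I⁻¹ ⊓ 1) M = max (ν I⁻¹ M) 0 :=
    hkey I⁻¹ hI' (by rw [hIii]; exact hI) (by rw [hIii, mul_comm]; exact hinv)
  have hνsum : ∀ M : MaximalSpectrum R, ν I M + ν I⁻¹ M = 0 := by
    intro M
    rw [← hνmul I I⁻¹ hI hI' M, hinv, hν1 M]
  intro hc
  constructor
  · have he : ν (I ⊓ 1) = (fun n : ℤ => max n 0) ∘ ν I := funext fun M => hk1 M
    rw [he]
    exact @Continuous.comp (MaximalSpectrum R) ℤ ℤ (invTop R) ⊥ ⊥ _ _ continuous_bot hc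
  · have he : ν (I⁻¹ ⊓ 1) = (fun n : ℤ => max (-n) 0) ∘ ν I := by
      funext M
      have h1 := hk2 M
      have h2 := hνsum M
      simp only [Function.comp_apply]
      omega
    rw [he]
    exact @Continuous.comp (MaximalSpectrum R) ℤ ℤ (invTop R) ⊥ ⊥ _ _ continuous_bot hc
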